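/- Let G be a finite d-regular simple graph on n vertices with d ≥ 1, let p ∈ [0,1], and let k ≥ 1 be an integer. Let W be the (random) set of vertices of G belonging to connected components of G_p of order at least d^k. Then P[ | |W| − E[|W|] | ≥ n^{2/3} ] ≤ 2·exp( − n^{1/3} / (5·d^{2k+1}) ). -/

import Mathlib

open Finset

variable {V : Type*}

/-- The number of neighbours of `v` in `G`. -/
noncomputable def degAt (G : SimpleGraph V) (v : V) : ℕ := {w | G.Adj v w}.ncard

/-- `G` is `d`-regular. -/
def IsRegOfDeg (G : SimpleGraph V) (d : ℕ) : Prop := ∀ v, degAt G v = d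

/-- The order (number of vertices) of the connected component of `v` in `H`. -/
noncomputable def compCard (H : SimpleGraph V) (v : V) : ℕ := {w | H.Reachable v w}.ncard

/-- The order of the largest connected component of `H`. -/
noncomputable def maxCompCard [Fintype V] (H : SimpleGraph V) : ℕ :=
  Finset.univ.sup (compCard H)

/-- The edge set of `G` as a `Finset`. -/
noncomputable def edgeFins (G : SimpleGraph V) [Fintype V] : Finset (Sym2 V) :=
  G.edgeSet.toFinite.toFinset

open Classical in
/-- The probability of the event `A` under bond percolation on `G` with retention
probability `p`: each edge of `G` is retained independently with probability `p`. -/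
noncomputable def percProb [Fintype V] (G : SimpleGraph V) (p : ℝ)
    (A : SimpleGraph V → Prop) : ℝ :=
  ∑ F ∈ (edgeFins G).powerset,
    if A (SimpleGraph.fromEdgeSet (↑F)) then
      p ^ F.card * (1 - p) ^ ((edgeFins G).card - F.card) else 0

open Classical in
/-- Percolation expectation of an ℝ-valued observable. -/
noncomputable def percExp [Fintype V] (G : SimpleGraph V) (p : ℝ)
    (X : SimpleGraph V → ℝ) : ℝ :=
  ∑ F ∈ (edgeFins G).powerset,
    p ^ F.card * (1 - p) ^ ((edgeFins G).card - F.card) *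
      X (SimpleGraph.fromEdgeSet (↑F))

open Classical in
/-- The probability of the event `A` under three independent bond percolations on `G`
with retention probabilities `p₁, p₂, p₃`. -/
noncomputable def percProb3 [Fintype V] (G : SimpleGraph V) (p₁ p₂ p₃ : ℝ)
    (A : SimpleGraph V → SimpleGraph V → SimpleGraph V → Prop) : ℝ :=
  ∑ F₁ ∈ (edgeFins G).powerset, ∑ F₂ ∈ (edgeFins G).powerset, ∑ F₃ ∈ (edgeFins G).powerset,
    if A (SimpleGraph.fromEdgeSet (↑F₁)) (SimpleGraph.fromEdgeSet (↑F₂))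
        (SimpleGraph.fromEdgeSet (↑F₃)) then
      (p₁ ^ F₁.card * (1 - p₁) ^ ((edgeFins G).card - F₁.card)) *
      (p₂ ^ F₂.card * (1 - p₂) ^ ((edgeFins G).card - F₂.card)) *
      (p₃ ^ F₃.card * (1 - p₃) ^ ((edgeFins G).card - F₃.card))
    else 0

/-- The Cartesian product of the graphs `Gs i`, `i : Fin t`. -/
def prodGraph {t : ℕ} {V : Fin t → Type*} (Gs : ∀ i, SimpleGraph (V i)) :
    SimpleGraph (∀ i, V i) where
  Adj u v := ∃ i, (Gs i).Adj (u i) (v i) ∧ ∀ j, j ≠ i → u j = v j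
  symm := by
    refine ⟨?_⟩
    rintro u v ⟨i, hadj, h⟩
    exact ⟨i, hadj.symm, fun j hj => (h j hj).symm⟩
  loopless := by
    refine ⟨?_⟩
    rintro u ⟨i, hadj, -⟩
    exact (Gs i).loopless.irrefl _ hadj





lemma exp_convex_seg {c l y : ℝ} (hc : 0 < c) (hy : |y| ≤ c) :
    Real.exp (l * y) ≤
      (c + y) / (2 * c) * Real.exp (l * c) + (c - y) / (2 * c) * Real.exp (-(l * c)) := by
  have hy1 : -c ≤ y := (abs_le.1 hy).1
  have hy2 : y ≤ c := (abs_le.1 hy).2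
  have hc0 : c ≠ 0 := hc.ne'
  have h1 : (0:ℝ) ≤ (c + y) / (2 * c) := by
    apply div_nonneg <;> linarith
  have h2 : (0:ℝ) ≤ (c - y) / (2 * c) := by
    apply div_nonneg <;> linarith
  have hsum : (c + y) / (2 * c) + (c - y) / (2 * c) = 1 := by
    field_simp; ring
  have := convexOn_exp.2 (Set.mem_univ (l * c)) (Set.mem_univ (-(l * c))) h1 h2 hsum
  have harg : ((c + y) / (2 * c)) • (l * c) + ((c - y) / (2 * c)) • (-(l * c)) = l * y := by
    simp only [smul_eq_mul]
    field_simp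
    ring
  rw [harg] at this
  simpa [smul_eq_mul] using this

lemma two_point {p a b c l : ℝ} (hp0 : 0 ≤ p) (hp1 : p ≤ 1) (hc : 0 < c)
    (hab : |a - b| ≤ c) :
    p * Real.exp (l * a) + (1 - p) * Real.exp (l * b) ≤
      Real.exp (l * (p * a + (1 - p) * b) + l ^ 2 * c ^ 2 / 2) := by
  set μ := p * a + (1 - p) * b with hμ
  have hya : |a - μ| ≤ c := by
    have : a - μ = (1 - p) * (a - b) := by rw [hμ]; ring
    rw [this, abs_mul, abs_of_nonneg (by linarith : (0:ℝ) ≤ 1 - p)]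
    calc (1 - p) * |a - b| ≤ 1 * c := by
          apply mul_le_mul (by linarith) hab (abs_nonneg _) zero_le_one
      _ = c := one_mul c
  have hyb : |b - μ| ≤ c := by
    have : b - μ = -(p * (a - b)) := by rw [hμ]; ring
    rw [this, abs_neg, abs_mul, abs_of_nonneg hp0]
    calc p * |a - b| ≤ 1 * c := mul_le_mul hp1 hab (abs_nonneg _) zero_le_one
      _ = c := one_mul c
  have key : p * Real.exp (l * (a - μ)) + (1 - p) * Real.exp (l * (b - μ)) ≤
      Real.exp (l ^ 2 * c ^ 2 / 2) := by
    have h1 := exp_convex_seg hc hya (l := l)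
    have h2 := exp_convex_seg hc hyb (l := l)
    have hcancel : p * (a - μ) + (1 - p) * (b - μ) = 0 := by rw [hμ]; ring
    calc p * Real.exp (l * (a - μ)) + (1 - p) * Real.exp (l * (b - μ))
        ≤ p * ((c + (a - μ)) / (2 * c) * Real.exp (l * c) +
              (c - (a - μ)) / (2 * c) * Real.exp (-(l * c))) +
          (1 - p) * ((c + (b - μ)) / (2 * c) * Real.exp (l * c) +
              (c - (b - μ)) / (2 * c) * Real.exp (-(l * c))) := by
          apply add_le_add
          · exact mul_le_mul_of_nonneg_left h1 hp0
          · exact mul_le_mul_of_nonneg_left h2 (by linarith)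
      _ = Real.cosh (l * c) := by
          have hc0 : c ≠ 0 := hc.ne'
          have e1 : p * ((c + (a - μ)) / (2 * c)) + (1 - p) * ((c + (b - μ)) / (2 * c))
              = 1 / 2 := by
            field_simp
            linarith [hcancel]
          have e2 : p * ((c - (a - μ)) / (2 * c)) + (1 - p) * ((c - (b - μ)) / (2 * c))
              = 1 / 2 := by
            field_simp
            linarith [hcancel]
          rw [Real.cosh_eq]
          calc p * ((c + (a - μ)) / (2 * c) * Real.exp (l * c) +
                  (c - (a - μ)) / (2 * c) * Real.exp (-(l * c))) +
                (1 - p) * ((c + (b - μ)) / (2 * c) * Real.exp (l * c) +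
                  (c - (b - μ)) / (2 * c) * Real.exp (-(l * c)))
              = (p * ((c + (a - μ)) / (2 * c)) + (1 - p) * ((c + (b - μ)) / (2 * c))) *
                  Real.exp (l * c) +
                (p * ((c - (a - μ)) / (2 * c)) + (1 - p) * ((c - (b - μ)) / (2 * c))) *
                  Real.exp (-(l * c)) := by ring
            _ = (Real.exp (l * c) + Real.exp (-(l * c))) / 2 := by rw [e1, e2]; ring
      _ ≤ Real.exp ((l * c) ^ 2 / 2) := Real.cosh_le_exp_half_sq _
      _ = Real.exp (l ^ 2 * c ^ 2 / 2) := by ring_nf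
  have := mul_le_mul_of_nonneg_left key (Real.exp_nonneg (l * μ))
  calc p * Real.exp (l * a) + (1 - p) * Real.exp (l * b)
      = Real.exp (l * μ) * (p * Real.exp (l * (a - μ)) + (1 - p) * Real.exp (l * (b - μ))) := by
        rw [mul_add, ← mul_assoc, ← mul_assoc, mul_comm (Real.exp (l*μ)) p,
          mul_comm (Real.exp (l*μ)) (1-p), mul_assoc, mul_assoc, ← Real.exp_add, ← Real.exp_add]
        ring_nf
    _ ≤ Real.exp (l * μ) * Real.exp (l ^ 2 * c ^ 2 / 2) := this
    _ = Real.exp (l * μ + l ^ 2 * c ^ 2 / 2) := (Real.exp_add _ _).symm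


section Mgf
variable {ι : Type*} [DecidableEq ι]

noncomputable def wgt (p : ℝ) (m : ℕ) (F : Finset ι) : ℝ := p ^ F.card * (1 - p) ^ (m - F.card)

lemma wgt_nonneg {p : ℝ} (hp0 : 0 ≤ p) (hp1 : p ≤ 1) (m : ℕ) (F : Finset ι) :
    0 ≤ wgt p m F := by
  unfold wgt
  have : (0:ℝ) ≤ 1 - p := by linarith
  positivity

lemma wgt_insert_not_mem {p : ℝ} {e : ι} {F : Finset ι} (he : e ∉ F) (m : ℕ) :
    wgt p (m + 1) (insert e F) = p * wgt p m F := by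
  unfold wgt
  rw [Finset.card_insert_of_notMem he]
  rw [Nat.succ_sub_succ]
  ring

lemma wgt_succ {p : ℝ} {F : Finset ι} {m : ℕ} (h : F.card ≤ m) :
    wgt p (m + 1) F = (1 - p) * wgt p m F := by
  unfold wgt
  rw [Nat.succ_sub h, pow_succ]
  ring

/-- Mean of `f` over the weighted powerset of `s`. -/
noncomputable def pmean (p : ℝ) (s : Finset ι) (f : Finset ι → ℝ) : ℝ :=
  ∑ F ∈ s.powerset, wgt p s.card F * f F

lemma pmean_insert {p : ℝ} {e : ι} {s : Finset ι} (he : e ∉ s) (f : Finset ι → ℝ) :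
    pmean p (insert e s) f = pmean p s (fun F => p * f (insert e F) + (1 - p) * f F) := by
  unfold pmean
  rw [Finset.sum_powerset_insert he, Finset.card_insert_of_notMem he]
  rw [← Finset.sum_add_distrib]
  apply Finset.sum_congr rfl
  intro F hF
  have hFs : F ⊆ s := Finset.mem_powerset.1 hF
  have heF : e ∉ F := fun h => he (hFs h)
  rw [wgt_insert_not_mem heF, wgt_succ (Finset.card_le_card hFs)]
  ring

lemma mgf_bound (p c l : ℝ) (hp0 : 0 ≤ p) (hp1 : p ≤ 1) (hc : 0 < c)
    (s : Finset ι) (f : Finset ι → ℝ)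
    (hf : ∀ e ∈ s, ∀ F ⊆ s.erase e, |f (insert e F) - f F| ≤ c) :
    ∑ F ∈ s.powerset, wgt p s.card F * Real.exp (l * (f F - pmean p s f))
      ≤ Real.exp (s.card * (l ^ 2 * c ^ 2 / 2)) := by
  induction s using Finset.induction_on generalizing f with
  | empty =>
    simp [pmean, wgt]
  | @insert e s' he ih =>
    set μ := pmean p (insert e s') f with hμdef
    set g : Finset ι → ℝ := fun F => p * f (insert e F) + (1 - p) * f F with hg
    have hμ : μ = pmean p s' g := pmean_insert he f
    have hgbd : ∀ e' ∈ s', ∀ F ⊆ s'.erase e', |g (insert e' F) - g F| ≤ c := by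
      intro e' he' F hF
      have hee' : e ≠ e' := fun h => he (h ▸ he')
      have h1 : F ⊆ (insert e s').erase e' := by
        refine hF.trans (Finset.erase_subset_erase _ (Finset.subset_insert e s'))
      have h2 : insert e F ⊆ (insert e s').erase e' := by
        intro x hx
        rcases Finset.mem_insert.1 hx with h | h
        · subst h
          exact Finset.mem_erase.2 ⟨hee', Finset.mem_insert_self _ _⟩
        · exact h1 h
      have b1 := hf e' (Finset.mem_insert_of_mem he') F h1
      have b2 := hf e' (Finset.mem_insert_of_mem he') (insert e F) h2
      rw [Finset.insert_comm] at b2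
      have : g (insert e' F) - g F =
          p * (f (insert e (insert e' F)) - f (insert e F)) +
          (1 - p) * (f (insert e' F) - f F) := by rw [hg]; ring
      rw [this]
      calc |p * (f (insert e (insert e' F)) - f (insert e F)) +
              (1 - p) * (f (insert e' F) - f F)|
          ≤ |p * (f (insert e (insert e' F)) - f (insert e F))| +
            |(1 - p) * (f (insert e' F) - f F)| := abs_add_le _ _
        _ ≤ p * c + (1 - p) * c := by
            rw [abs_mul, abs_mul, abs_of_nonneg hp0, abs_of_nonneg (by linarith : (0:ℝ) ≤ 1 - p)]
            exact add_le_add (mul_le_mul_of_nonneg_left b2 hp0)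
              (mul_le_mul_of_nonneg_left b1 (by linarith))
        _ = c := by ring
    have key : ∀ F ∈ s'.powerset,
        wgt p (insert e s').card (insert e F) * Real.exp (l * (f (insert e F) - μ)) +
        wgt p (insert e s').card F * Real.exp (l * (f F - μ)) ≤
        wgt p s'.card F * Real.exp (l * (g F - μ) + l ^ 2 * c ^ 2 / 2) := by
      intro F hF
      have hFs : F ⊆ s' := Finset.mem_powerset.1 hF
      have heF : e ∉ F := fun h => he (hFs h)
      rw [Finset.card_insert_of_notMem he, wgt_insert_not_mem heF,
        wgt_succ (Finset.card_le_card hFs)]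
      have habd : |(f (insert e F) - μ) - (f F - μ)| ≤ c := by
        have hFe : F ⊆ (insert e s').erase e := by
          rwa [Finset.erase_insert he]
        have := hf e (Finset.mem_insert_self _ _) F hFe
        simpa using this
      have h2p := two_point (a := f (insert e F) - μ) (b := f F - μ) (l := l)
        hp0 hp1 hc habd
      have harg : l * (p * (f (insert e F) - μ) + (1 - p) * (f F - μ)) + l ^ 2 * c ^ 2 / 2
          = l * (g F - μ) + l ^ 2 * c ^ 2 / 2 := by rw [hg]; ring
      rw [harg] at h2p
      calc p * wgt p s'.card F * Real.exp (l * (f (insert e F) - μ)) +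
            (1 - p) * wgt p s'.card F * Real.exp (l * (f F - μ))
          = wgt p s'.card F * (p * Real.exp (l * (f (insert e F) - μ)) +
              (1 - p) * Real.exp (l * (f F - μ))) := by ring
        _ ≤ wgt p s'.card F * Real.exp (l * (g F - μ) + l ^ 2 * c ^ 2 / 2) :=
            mul_le_mul_of_nonneg_left h2p (wgt_nonneg hp0 hp1 _ _)
    calc ∑ F ∈ (insert e s').powerset,
          wgt p (insert e s').card F * Real.exp (l * (f F - μ))
        = ∑ F ∈ s'.powerset, (wgt p (insert e s').card (insert e F) *
              Real.exp (l * (f (insert e F) - μ)) +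
            wgt p (insert e s').card F * Real.exp (l * (f F - μ))) := by
          rw [Finset.sum_powerset_insert he, Finset.sum_add_distrib]
          ring
      _ ≤ ∑ F ∈ s'.powerset, wgt p s'.card F * Real.exp (l * (g F - μ) + l ^ 2 * c ^ 2 / 2) :=
          Finset.sum_le_sum key
      _ = Real.exp (l ^ 2 * c ^ 2 / 2) *
            ∑ F ∈ s'.powerset, wgt p s'.card F * Real.exp (l * (g F - μ)) := by
          rw [Finset.mul_sum]
          apply Finset.sum_congr rfl
          intro F _
          rw [Real.exp_add]
          ring
      _ ≤ Real.exp (l ^ 2 * c ^ 2 / 2) * Real.exp (s'.card * (l ^ 2 * c ^ 2 / 2)) := by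
          apply mul_le_mul_of_nonneg_left _ (Real.exp_nonneg _)
          rw [hμ]
          exact ih g hgbd
      _ = Real.exp ((insert e s').card * (l ^ 2 * c ^ 2 / 2)) := by
          rw [← Real.exp_add, Finset.card_insert_of_notMem he]
          push_cast
          ring_nf

end Mgf
section Chernoff
variable {ι : Type*} [DecidableEq ι]

lemma chernoff_one (p c t : ℝ) (hp0 : 0 ≤ p) (hp1 : p ≤ 1) (hc : 0 < c) (ht : 0 < t)
    (s : Finset ι) (hm : 0 < s.card) (f : Finset ι → ℝ)
    (hf : ∀ e ∈ s, ∀ F ⊆ s.erase e, |f (insert e F) - f F| ≤ c) :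
    ∑ F ∈ s.powerset, (if t ≤ f F - pmean p s f then wgt p s.card F else 0)
      ≤ Real.exp (-(t ^ 2 / (2 * s.card * c ^ 2))) := by
  set m : ℝ := (s.card : ℝ) with hm'
  have hmpos : (0:ℝ) < m := by rw [hm']; exact_mod_cast hm
  set l : ℝ := t / (m * c ^ 2) with hl
  have hlpos : 0 < l := by
    apply div_pos ht
    positivity
  have step : ∀ F ∈ s.powerset,
      (if t ≤ f F - pmean p s f then wgt p s.card F else 0) ≤
        Real.exp (-(l * t)) * (wgt p s.card F * Real.exp (l * (f F - pmean p s f))) := by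
    intro F _
    by_cases h : t ≤ f F - pmean p s f
    · rw [if_pos h]
      have h1 : l * t ≤ l * (f F - pmean p s f) := mul_le_mul_of_nonneg_left h hlpos.le
      have h2 : (1:ℝ) ≤ Real.exp (-(l * t)) * Real.exp (l * (f F - pmean p s f)) := by
        rw [← Real.exp_add]
        apply Real.one_le_exp
        linarith
      calc wgt p s.card F = wgt p s.card F * 1 := (mul_one _).symm
        _ ≤ wgt p s.card F *
            (Real.exp (-(l * t)) * Real.exp (l * (f F - pmean p s f))) :=
            mul_le_mul_of_nonneg_left h2 (wgt_nonneg hp0 hp1 _ _)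
        _ = Real.exp (-(l * t)) * (wgt p s.card F * Real.exp (l * (f F - pmean p s f))) := by
            ring
    · rw [if_neg h]
      have := wgt_nonneg (p := p) hp0 hp1 s.card F
      positivity
  calc ∑ F ∈ s.powerset, (if t ≤ f F - pmean p s f then wgt p s.card F else 0)
      ≤ ∑ F ∈ s.powerset,
          Real.exp (-(l * t)) * (wgt p s.card F * Real.exp (l * (f F - pmean p s f))) :=
        Finset.sum_le_sum step
    _ = Real.exp (-(l * t)) *
          ∑ F ∈ s.powerset, wgt p s.card F * Real.exp (l * (f F - pmean p s f)) := by
        rw [Finset.mul_sum]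
    _ ≤ Real.exp (-(l * t)) * Real.exp (s.card * (l ^ 2 * c ^ 2 / 2)) := by
        exact mul_le_mul_of_nonneg_left (mgf_bound p c l hp0 hp1 hc s f hf)
          (Real.exp_nonneg _)
    _ = Real.exp (-(l * t) + m * (l ^ 2 * c ^ 2 / 2)) := by rw [← Real.exp_add]
    _ = Real.exp (-(t ^ 2 / (2 * m * c ^ 2))) := by
        congr 1
        rw [hl]
        have hc0 : c ≠ 0 := hc.ne'
        have hm0 : m ≠ 0 := hmpos.ne'
        field_simp
        ring

lemma pmean_neg (p : ℝ) (s : Finset ι) (f : Finset ι → ℝ) :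
    pmean p s (fun F => -(f F)) = -(pmean p s f) := by
  unfold pmean
  rw [← Finset.sum_neg_distrib]
  apply Finset.sum_congr rfl
  intro F _
  ring

lemma chernoff_two (p c t : ℝ) (hp0 : 0 ≤ p) (hp1 : p ≤ 1) (hc : 0 < c) (ht : 0 < t)
    (s : Finset ι) (hm : 0 < s.card) (f : Finset ι → ℝ)
    (hf : ∀ e ∈ s, ∀ F ⊆ s.erase e, |f (insert e F) - f F| ≤ c) :
    ∑ F ∈ s.powerset, (if t ≤ |f F - pmean p s f| then wgt p s.card F else 0)
      ≤ 2 * Real.exp (-(t ^ 2 / (2 * s.card * c ^ 2))) := by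
  have hfneg : ∀ e ∈ s, ∀ F ⊆ s.erase e,
      |(fun F => -(f F)) (insert e F) - (fun F => -(f F)) F| ≤ c := by
    intro e he F hF
    have := hf e he F hF
    rw [abs_sub_comm] at this
    simpa [neg_add_eq_sub] using this
  have h1 := chernoff_one p c t hp0 hp1 hc ht s hm f hf
  have h2 := chernoff_one p c t hp0 hp1 hc ht s hm (fun F => -(f F)) hfneg
  rw [pmean_neg] at h2
  have hsplit : ∀ F ∈ s.powerset,
      (if t ≤ |f F - pmean p s f| then wgt p s.card F else 0) ≤
        (if t ≤ f F - pmean p s f then wgt p s.card F else 0) +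
        (if t ≤ -(f F) - -(pmean p s f) then wgt p s.card F else 0) := by
    intro F _
    have hw := wgt_nonneg (p := p) hp0 hp1 s.card F
    have hA : (0:ℝ) ≤ if t ≤ f F - pmean p s f then wgt p s.card F else 0 := by
      split <;> simp [hw]
    have hB : (0:ℝ) ≤ if t ≤ -(f F) - -(pmean p s f) then wgt p s.card F else 0 := by
      split <;> simp [hw]
    by_cases h : t ≤ |f F - pmean p s f|
    · rw [if_pos h]
      rcases le_abs.1 h with hx | hx
      · rw [if_pos hx]
        linarith
      · have hx' : t ≤ -(f F) - -(pmean p s f) := by linarith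
        rw [if_pos hx']
        linarith
    · rw [if_neg h]
      linarith
  calc ∑ F ∈ s.powerset, (if t ≤ |f F - pmean p s f| then wgt p s.card F else 0)
      ≤ ∑ F ∈ s.powerset,
          ((if t ≤ f F - pmean p s f then wgt p s.card F else 0) +
           (if t ≤ -(f F) - -(pmean p s f) then wgt p s.card F else 0)) :=
        Finset.sum_le_sum hsplit
    _ = (∑ F ∈ s.powerset, (if t ≤ f F - pmean p s f then wgt p s.card F else 0)) +
        (∑ F ∈ s.powerset, (if t ≤ -(f F) - -(pmean p s f) then wgt p s.card F else 0)) :=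
        Finset.sum_add_distrib
    _ ≤ Real.exp (-(t ^ 2 / (2 * s.card * c ^ 2))) +
          Real.exp (-(t ^ 2 / (2 * s.card * c ^ 2))) := add_le_add h1 h2
    _ = 2 * Real.exp (-(t ^ 2 / (2 * s.card * c ^ 2))) := by ring

end Chernoff

section Comb
variable {V : Type*}

lemma reach_of_insert_edge {H : SimpleGraph V} {x y v w : V}
    (hvx : ¬ H.Reachable v x) (hvy : ¬ H.Reachable v y)
    (h : (H ⊔ SimpleGraph.fromEdgeSet {s(x, y)}).Reachable v w) : H.Reachable v w := by
  rw [SimpleGraph.reachable_iff_reflTransGen] at h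
  induction h with
  | refl => exact SimpleGraph.Reachable.refl v
  | tail _ hadj ih =>
    rename_i b c' _
    rcases (SimpleGraph.sup_adj _ _ _ _).1 hadj with hH | hE
    · exact ih.trans hH.reachable
    · rw [SimpleGraph.fromEdgeSet_adj] at hE
      obtain ⟨hmem, hne⟩ := hE
      rw [Set.mem_singleton_iff, Sym2.eq_iff] at hmem
      rcases hmem with ⟨hb, _⟩ | ⟨hb, _⟩
      · exact absurd (hb ▸ ih) hvx
      · exact absurd (hb ▸ ih) hvy

lemma compCard_mono [Fintype V] {H H' : SimpleGraph V} (h : H ≤ H') (v : V) :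
    compCard H v ≤ compCard H' v := by
  apply Set.ncard_le_ncard _ (Set.toFinite _)
  intro w hw
  exact SimpleGraph.Reachable.mono h hw

lemma bdd_diff [Fintype V] [DecidableEq (Sym2 V)] (d k : ℕ) (hd : 1 ≤ d) (e : Sym2 V) (F : Finset (Sym2 V)) :
    |(({v | d ^ k ≤ compCard (SimpleGraph.fromEdgeSet (↑(insert e F) : Set (Sym2 V))) v}.ncard : ℝ)) -
      (({v | d ^ k ≤ compCard (SimpleGraph.fromEdgeSet (↑F : Set (Sym2 V))) v}.ncard : ℝ))| ≤
      2 * (d : ℝ) ^ k := by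
  induction e using Sym2.ind with
  | _ x y =>
  by_cases hxy : x = y
  · have hgraph : SimpleGraph.fromEdgeSet (↑(insert s(x, y) F) : Set (Sym2 V)) =
        SimpleGraph.fromEdgeSet (↑F : Set (Sym2 V)) := by
      subst hxy
      ext a b
      simp only [SimpleGraph.fromEdgeSet_adj, Finset.coe_insert, Set.mem_insert_iff]
      constructor
      · rintro ⟨h1 | h1, h2⟩
        · rw [Sym2.eq_iff] at h1
          rcases h1 with ⟨ha, hb⟩ | ⟨ha, hb⟩ <;> exact absurd (ha.trans hb.symm) h2
        · exact ⟨h1, h2⟩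
      · rintro ⟨h1, h2⟩
        exact ⟨Or.inr h1, h2⟩
    rw [hgraph, sub_self, abs_zero]
    positivity
  · set H := SimpleGraph.fromEdgeSet (↑F : Set (Sym2 V)) with hHdef
    have hgraph : SimpleGraph.fromEdgeSet (↑(insert s(x, y) F) : Set (Sym2 V)) =
        H ⊔ SimpleGraph.fromEdgeSet {s(x, y)} := by
      rw [Finset.coe_insert, Set.insert_eq, SimpleGraph.fromEdgeSet_union, sup_comm]
    rw [hgraph]
    set H' := H ⊔ SimpleGraph.fromEdgeSet {s(x, y)} with hH'def
    set A := {v | d ^ k ≤ compCard H' v} with hA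
    set B := {v | d ^ k ≤ compCard H v} with hB
    have hBA : B ⊆ A := by
      intro v hv
      exact le_trans hv (compCard_mono le_sup_left v)
    have hcard : B.ncard ≤ A.ncard := Set.ncard_le_ncard hBA (Set.toFinite _)
    set Sx := {w | H.Reachable x w} \ B with hSx
    set Sy := {w | H.Reachable y w} \ B with hSy
    have hsub : A \ B ⊆ Sx ∪ Sy := by
      intro v ⟨hvA, hvB⟩
      by_cases hvx : H.Reachable x v
      · exact Or.inl ⟨hvx, hvB⟩
      · by_cases hvy : H.Reachable y v
        · exact Or.inr ⟨hvy, hvB⟩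
        · exfalso
          have hss : {w | H'.Reachable v w} ⊆ {w | H.Reachable v w} := by
            intro w hw
            exact reach_of_insert_edge (fun h => hvx h.symm) (fun h => hvy h.symm) hw
          have hle : compCard H' v ≤ compCard H v :=
            Set.ncard_le_ncard hss (Set.toFinite _)
          exact hvB (le_trans hvA hle)
    have hSxcard : Sx.ncard ≤ d ^ k := by
      rcases Set.eq_empty_or_nonempty Sx with h | ⟨w, hwreach, hwB⟩
      · rw [h, Set.ncard_empty]
        exact Nat.zero_le _
      · have hss : Sx ⊆ {u | H.Reachable w u} := by
          rintro u ⟨hu, _⟩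
          exact (Set.mem_setOf_eq ▸ hwreach).symm.trans hu
        have h2 := Set.ncard_le_ncard hss (Set.toFinite _)
        have h3 : compCard H w < d ^ k := lt_of_not_ge hwB
        exact le_trans h2 (le_of_lt h3)
    have hSycard : Sy.ncard ≤ d ^ k := by
      rcases Set.eq_empty_or_nonempty Sy with h | ⟨w, hwreach, hwB⟩
      · rw [h, Set.ncard_empty]
        exact Nat.zero_le _
      · have hss : Sy ⊆ {u | H.Reachable w u} := by
          rintro u ⟨hu, _⟩
          exact (Set.mem_setOf_eq ▸ hwreach).symm.trans hu
        have h2 := Set.ncard_le_ncard hss (Set.toFinite _)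
        have h3 : compCard H w < d ^ k := lt_of_not_ge hwB
        exact le_trans h2 (le_of_lt h3)
    have hdiff : (A \ B).ncard ≤ 2 * d ^ k := by
      calc (A \ B).ncard ≤ (Sx ∪ Sy).ncard := Set.ncard_le_ncard hsub (Set.toFinite _)
        _ ≤ Sx.ncard + Sy.ncard := Set.ncard_union_le _ _
        _ ≤ d ^ k + d ^ k := add_le_add hSxcard hSycard
        _ = 2 * d ^ k := by ring
    have hdiffeq : (A \ B).ncard = A.ncard - B.ncard := Set.ncard_diff hBA (Set.toFinite _)
    have hnn : (0:ℝ) ≤ (A.ncard : ℝ) - (B.ncard : ℝ) := by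
      rw [sub_nonneg]
      exact_mod_cast hcard
    rw [abs_of_nonneg hnn]
    have : (A.ncard : ℝ) - B.ncard = ((A \ B).ncard : ℝ) := by
      rw [hdiffeq, Nat.cast_sub hcard]
    rw [this]
    calc ((A \ B).ncard : ℝ) ≤ ((2 * d ^ k : ℕ) : ℝ) := by exact_mod_cast hdiff
      _ = 2 * (d : ℝ) ^ k := by push_cast; ring

end Comb

lemma handshake {V : Type*} [Fintype V] (G : SimpleGraph V) (d : ℕ)
    (hreg : IsRegOfDeg G d) : 2 * (edgeFins G).card = Fintype.card V * d := by
  classical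
  have hdeg : ∀ v : V, G.degree v = d := by
    intro v
    rw [← hreg v]
    have h1 : degAt G v = Fintype.card (G.neighborSet v) := by
      unfold degAt
      rw [show {w | G.Adj v w} = (G.neighborSet v : Set V) from rfl]
      rw [← Nat.card_coe_set_eq, Nat.card_eq_fintype_card]
    rw [h1, SimpleGraph.card_neighborSet_eq_degree]
  have hsum := SimpleGraph.sum_degrees_eq_twice_card_edges G
  have hconst : ∑ v : V, G.degree v = Fintype.card V * d := by
    rw [Finset.sum_congr rfl (fun v _ => hdeg v), Finset.sum_const, Finset.card_univ,
      smul_eq_mul]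
  have hedge : edgeFins G = G.edgeFinset := by
    ext a
    unfold edgeFins
    rw [Set.Finite.mem_toFinset, SimpleGraph.mem_edgeFinset]
  rw [hedge]
  omega


/-- concentration (Azuma–Hoeffding) of the number `|W|` of vertices in
components of `G_p` of order at least `d^k`:
`P[||W| - E|W|| ≥ n^{2/3}] ≤ 2 exp(-n^{1/3}/(5 d^{2k+1}))`. -/
theorem stmt_16 (V : Type) [Fintype V] (G : SimpleGraph V) (d : ℕ) (hd : 1 ≤ d)
    (hreg : IsRegOfDeg G d) (n : ℕ) (hn : n = Fintype.card V)
    (p : ℝ) (hp0 : 0 ≤ p) (hp1 : p ≤ 1) (k : ℕ) (hk : 1 ≤ k) :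
    percProb G p (fun H =>
        (n : ℝ) ^ ((2 : ℝ) / 3) ≤
          |({v | d ^ k ≤ compCard H v}.ncard : ℝ) -
            percExp G p (fun H' => (({v | d ^ k ≤ compCard H' v}).ncard : ℝ))|) ≤
      2 * Real.exp (-(n : ℝ) ^ ((1 : ℝ) / 3) / (5 * (d : ℝ) ^ (2 * k + 1))) := by
  classical
  rcases Nat.eq_zero_or_pos n with hn0 | hnpos
  · -- degenerate case `n = 0`
    have hV : IsEmpty V := by
      rw [← Fintype.card_eq_zero_iff, ← hn, hn0]
    have hE : edgeFins G = ∅ := by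
      apply Finset.eq_empty_of_forall_notMem
      intro a
      exact fun _ => (Sym2.instIsEmpty (α := V)).false a
    have hRHS : (2:ℝ) * Real.exp (-(n : ℝ) ^ ((1 : ℝ) / 3) / (5 * (d : ℝ) ^ (2 * k + 1)))
        = 2 := by
      rw [hn0, Nat.cast_zero, Real.zero_rpow (by norm_num : (1:ℝ)/3 ≠ 0)]
      norm_num
    rw [hRHS]
    simp only [percProb, hE, Finset.powerset_empty, Finset.sum_singleton, Finset.card_empty,
      pow_zero, Nat.sub_zero, mul_one, one_mul]
    split <;> norm_num
  · -- main case `1 ≤ n`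
    set s : Finset (Sym2 V) := edgeFins G with hs
    set f : Finset (Sym2 V) → ℝ := fun F =>
      (({v | d ^ k ≤ compCard (SimpleGraph.fromEdgeSet (↑F : Set (Sym2 V))) v}).ncard : ℝ)
      with hf_def
    set t : ℝ := (n : ℝ) ^ ((2 : ℝ) / 3) with ht_def
    set c : ℝ := 2 * (d : ℝ) ^ k with hc_def
    have hd' : (0:ℝ) < (d : ℝ) := by exact_mod_cast hd
    have hc : 0 < c := by rw [hc_def]; positivity
    have hnr : (0:ℝ) < (n : ℝ) := by exact_mod_cast hnpos
    have ht : 0 < t := Real.rpow_pos_of_pos hnr _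
    have h2m : 2 * s.card = n * d := by
      rw [hs, handshake G d hreg, hn]
    have hm : 0 < s.card := by
      nlinarith [hnpos, hd]
    have hf : ∀ e ∈ s, ∀ F ⊆ s.erase e, |f (insert e F) - f F| ≤ c := by
      intro e _ F _
      exact bdd_diff d k hd e F
    have key := chernoff_two p c t hp0 hp1 hc ht s hm f hf
    have hLHS : percProb G p (fun H =>
        (n : ℝ) ^ ((2 : ℝ) / 3) ≤
          |({v | d ^ k ≤ compCard H v}.ncard : ℝ) -
            percExp G p (fun H' => (({v | d ^ k ≤ compCard H' v}).ncard : ℝ))|) =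
        ∑ F ∈ s.powerset, (if t ≤ |f F - pmean p s f| then wgt p s.card F else 0) := by
      simp only [percProb]
      apply Finset.sum_congr rfl
      intro F _
      exact if_congr Iff.rfl rfl rfl
    rw [hLHS]
    refine key.trans ?_
    have hD : (0:ℝ) < (d : ℝ) ^ (2 * k + 1) := by positivity
    have harg : (n : ℝ) ^ ((1 : ℝ) / 3) / (5 * (d : ℝ) ^ (2 * k + 1)) ≤
        t ^ 2 / (2 * (s.card : ℝ) * c ^ 2) := by
      have h2m' : 2 * (s.card : ℝ) = (n : ℝ) * (d : ℝ) := by exact_mod_cast h2m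
      have hcsq : c ^ 2 = 4 * (d : ℝ) ^ (2 * k) := by
        rw [hc_def, mul_pow, ← pow_mul, mul_comm k 2]
        norm_num
      have hden : 2 * (s.card : ℝ) * c ^ 2 = 4 * (n : ℝ) * (d : ℝ) ^ (2 * k + 1) := by
        rw [hcsq, h2m', pow_succ]
        ring
      have ht2 : t ^ 2 = (n : ℝ) * (n : ℝ) ^ ((1 : ℝ) / 3) := by
        rw [ht_def, ← Real.rpow_natCast ((n : ℝ) ^ ((2 : ℝ) / 3)) 2,
          ← Real.rpow_mul hnr.le,
          show (2 : ℝ) / 3 * ((2 : ℕ) : ℝ) = 1 + 1 / 3 by push_cast; norm_num,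
          Real.rpow_add hnr, Real.rpow_one]
      rw [hden, ht2]
      have hsimp : (n : ℝ) * (n : ℝ) ^ ((1 : ℝ) / 3) /
          (4 * (n : ℝ) * (d : ℝ) ^ (2 * k + 1)) =
          (n : ℝ) ^ ((1 : ℝ) / 3) / (4 * (d : ℝ) ^ (2 * k + 1)) := by
        field_simp
      rw [hsimp]
      apply div_le_div_of_nonneg_left (Real.rpow_nonneg hnr.le _) (by positivity)
      linarith
    have hneg : -(n : ℝ) ^ ((1 : ℝ) / 3) / (5 * (d : ℝ) ^ (2 * k + 1)) =
        -((n : ℝ) ^ ((1 : ℝ) / 3) / (5 * (d : ℝ) ^ (2 * k + 1))) := neg_div _ _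
    rw [hneg]
    apply mul_le_mul_of_nonneg_left _ (by norm_num : (0:ℝ) ≤ 2)
    exact Real.exp_le_exp.2 (neg_le_neg harg)
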